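/- Let q be a prime power and let k ≥ 1, d ≥ 1 be natural numbers. Then the number of quadruples (u,v,x,y) ∈ F_q^k × F_q^k × F_q^k × F_q^k with Z(u,v) = Z(x,y) is at most q^{4k}/q^{d+1} + (qd)^{2k} (as an inequality of real numbers). Equivalently, Σ_{z ∈ F_q^{d+1}} |Z^{-1}(z)|^2 ≤ q^{4k-(d+1)} + (qd)^{2k}. -/

import Mathlib

lemma aux_sum_pow_div_factorial (K : ℕ) (hK : 1 ≤ K) :
    ∀ d : ℕ, 1 ≤ d → ∑ m ∈ Finset.Icc 1 d, (m : ℝ) ^ K / (Nat.factorial m) ≤ (d : ℝ) ^ K := by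
  intro d hd
  induction d, hd using Nat.le_induction with
  | base => simp
  | succ d hd ih =>
    rw [Finset.sum_Icc_succ_top (by omega)]
    have h1 : ((d:ℝ)+1) ^ K / (Nat.factorial (d+1)) ≤ ((d:ℝ)+1) ^ (K-1) := by
      rw [div_le_iff₀ (by positivity)]
      calc ((d:ℝ)+1) ^ K = ((d:ℝ)+1)^(K-1) * ((d:ℝ)+1) := by
            rw [← pow_succ]; congr 1; omega
        _ ≤ ((d:ℝ)+1)^(K-1) * (Nat.factorial (d+1)) := by
            gcongr
            exact_mod_cast Nat.cast_le.mpr (Nat.self_le_factorial (d+1))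
    have h2 : (d:ℝ) ^ K + ((d:ℝ)+1) ^ (K-1) ≤ ((d:ℝ)+1) ^ K := by
      have he : ((d:ℝ)+1) ^ K = ((d:ℝ)+1)^(K-1) * ((d:ℝ)+1) := by
        rw [← pow_succ]; congr 1; omega
      have h3 : (d:ℝ) ^ K ≤ ((d:ℝ)+1)^(K-1) * d := by
        calc (d:ℝ) ^ K = (d:ℝ)^(K-1) * d := by rw [← pow_succ]; congr 1; omega
          _ ≤ ((d:ℝ)+1)^(K-1) * d := by gcongr; linarith
      nlinarith
    have hc : ((d+1:ℕ):ℝ) = (d:ℝ)+1 := by push_cast; ring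
    rw [hc]
    calc (∑ m ∈ Finset.Icc 1 d, (m : ℝ) ^ K / (Nat.factorial m)) + ((d:ℝ)+1) ^ K / (Nat.factorial (d+1))
        ≤ (d:ℝ)^K + ((d:ℝ)+1) ^ (K-1) := by gcongr
      _ ≤ ((d:ℝ)+1) ^ K := h2


noncomputable def Tmap {F : Type*} [Field F] (k d : ℕ) (u x : Fin k → F) :
    ((Fin k → F) × (Fin k → F)) →ₗ[F] (Fin (d+1) → F) where
  toFun vy := fun j => (∑ i, vy.1 i * u i ^ (j:ℕ)) - (∑ i, vy.2 i * x i ^ (j:ℕ))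
  map_add' a b := by
    funext j
    simp only [Prod.fst_add, Prod.snd_add, Pi.add_apply, add_mul, Finset.sum_add_distrib]
    ring
  map_smul' c a := by
    funext j
    simp only [Prod.smul_fst, Prod.smul_snd, Pi.smul_apply, smul_eq_mul, RingHom.id_apply,
      Finset.mul_sum]
    rw [mul_sub, Finset.mul_sum, Finset.mul_sum]
    congr 1 <;> exact Finset.sum_congr rfl (fun i _ => by ring)

lemma aux_fiber_card {F : Type*} [Field F] [Fintype F] [DecidableEq F] (k d : ℕ)
    (u x : Fin k → F) :
    Nat.card {vy : (Fin k → F) × (Fin k → F) //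
        (fun j : Fin (d + 1) => ∑ i, vy.1 i * u i ^ (j : ℕ)) =
        (fun j : Fin (d + 1) => ∑ i, vy.2 i * x i ^ (j : ℕ))} ≤
      Fintype.card F ^
        (2 * k - min ((Finset.image u Finset.univ ∪ Finset.image x Finset.univ).card) (d + 1)) := by
  classical
  set T := Tmap k d u x with hT
  set S : Finset F := Finset.image u Finset.univ ∪ Finset.image x Finset.univ with hS
  set r : ℕ := min S.card (d + 1) with hrdef
  -- identify the subtype with the kernel
  have hequiv : {vy : (Fin k → F) × (Fin k → F) //
        (fun j : Fin (d + 1) => ∑ i, vy.1 i * u i ^ (j : ℕ)) =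
        (fun j : Fin (d + 1) => ∑ i, vy.2 i * x i ^ (j : ℕ))} ≃ ↥(LinearMap.ker T) := by
    apply Equiv.subtypeEquivRight
    intro vy
    rw [LinearMap.mem_ker]
    constructor
    · intro h; funext j
      have := congrFun h j
      simp only [hT, Tmap, LinearMap.coe_mk, AddHom.coe_mk, Pi.zero_apply]
      rw [this]; ring
    · intro h; funext j
      have := congrFun h j
      simp only [hT, Tmap, LinearMap.coe_mk, AddHom.coe_mk, Pi.zero_apply] at this
      show (∑ i, vy.1 i * u i ^ (j:ℕ)) = ∑ i, vy.2 i * x i ^ (j:ℕ)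
      linear_combination this
  -- vandermonde vectors lie in the range
  have hmem : ∀ a ∈ S, (fun j : Fin (d+1) => a ^ (j:ℕ)) ∈ LinearMap.range T := by
    intro a haS
    rw [hS, Finset.mem_union, Finset.mem_image, Finset.mem_image] at haS
    rcases haS with ⟨i0, _, hi0⟩ | ⟨i0, _, hi0⟩
    · refine ⟨(Pi.single i0 1, 0), ?_⟩
      funext j
      simp [hT, Tmap, Pi.single_apply, ite_mul, hi0]
    · refine ⟨(0, -Pi.single i0 1), ?_⟩
      funext j
      simp [hT, Tmap, Pi.single_apply, ite_mul, hi0]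
  -- an r-element subset of S
  obtain ⟨S', hS'sub, hS'card⟩ := Finset.exists_subset_card_eq (min_le_left S.card (d+1))
  set e := Finset.equivFinOfCardEq hS'card with he
  set b : Fin r → F := fun i => ((e.symm i : ↥S') : F) with hb
  have hbinj : Function.Injective b := fun i j h => by
    have : e.symm i = e.symm j := Subtype.ext h
    exact e.symm.injective this
  have hli : LinearIndependent F (fun i : Fin r => fun j : Fin (d+1) => b i ^ (j:ℕ)) := by
    have hr : r ≤ d + 1 := min_le_right _ _
    have key : LinearIndependent F (fun i : Fin r => (Matrix.vandermonde b) i) := by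
      show LinearIndependent F (Matrix.vandermonde b).row
      rw [Matrix.linearIndependent_rows_iff_isUnit, Matrix.isUnit_iff_isUnit_det]
      exact isUnit_iff_ne_zero.mpr (Matrix.det_vandermonde_ne_zero_iff.mpr hbinj)
    have hcomp :
        (LinearMap.funLeft F F (Fin.castLE hr : Fin r → Fin (d+1))) ∘
          (fun i : Fin r => fun j : Fin (d+1) => b i ^ (j : ℕ))
        = fun i : Fin r => (Matrix.vandermonde b) i := by
      funext i; funext j; rfl
    exact LinearIndependent.of_comp _ (hcomp ▸ key)
  -- the family inside the range submodule
  have hbS : ∀ i, b i ∈ S := fun i => hS'sub (e.symm i).2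
  set g : Fin r → ↥(LinearMap.range T) :=
    fun i => ⟨fun j : Fin (d+1) => b i ^ (j:ℕ), hmem _ (hbS i)⟩ with hg
  have hlig : LinearIndependent F g := by
    apply LinearIndependent.of_comp (LinearMap.range T).subtype
    exact hli
  have hrank : r ≤ Module.finrank F ↥(LinearMap.range T) := by
    simpa using hlig.fintype_card_le_finrank
  have hdom : Module.finrank F ((Fin k → F) × (Fin k → F)) = 2 * k := by
    simp [Module.finrank_prod]; ring
  have hrn := LinearMap.finrank_range_add_finrank_ker T
  rw [hdom] at hrn
  have hker : Module.finrank F ↥(LinearMap.ker T) ≤ 2 * k - r := by omega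
  have hcard : Nat.card {vy : (Fin k → F) × (Fin k → F) //
        (fun j : Fin (d + 1) => ∑ i, vy.1 i * u i ^ (j : ℕ)) =
        (fun j : Fin (d + 1) => ∑ i, vy.2 i * x i ^ (j : ℕ))} =
      Fintype.card F ^ Module.finrank F ↥(LinearMap.ker T) := by
    rw [Nat.card_congr hequiv, Nat.card_eq_fintype_card]
    exact Module.card_eq_pow_finrank
  rw [hcard]
  exact Nat.pow_le_pow_right Fintype.card_pos hker


theorem stmt_4 (F : Type*) [Field F] [Fintype F] (k d : ℕ) (hk : 1 ≤ k) (hd : 1 ≤ d) :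
    (Nat.card {t : ((Fin k → F) × (Fin k → F)) × ((Fin k → F) × (Fin k → F)) //
        (fun j : Fin (d + 1) => ∑ i, t.1.2 i * t.1.1 i ^ (j : ℕ)) =
        (fun j : Fin (d + 1) => ∑ i, t.2.2 i * t.2.1 i ^ (j : ℕ))} : ℝ) ≤
      (Fintype.card F : ℝ) ^ (4 * k) / (Fintype.card F : ℝ) ^ (d + 1) +
        ((Fintype.card F : ℝ) * (d : ℝ)) ^ (2 * k) := by
  classical
  set q := Fintype.card F with hq
  have hq0 : (0:ℝ) < (q:ℝ) := by exact_mod_cast Fintype.card_pos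
  -- fibers
  let P := (Fin k → F) × (Fin k → F)
  let Fib : P → Type _ := fun ux => {vy : P //
      (fun j : Fin (d + 1) => ∑ i, vy.1 i * ux.1 i ^ (j : ℕ)) =
      (fun j : Fin (d + 1) => ∑ i, vy.2 i * ux.2 i ^ (j : ℕ))}
  let e : {t : P × P //
        (fun j : Fin (d + 1) => ∑ i, t.1.2 i * t.1.1 i ^ (j : ℕ)) =
        (fun j : Fin (d + 1) => ∑ i, t.2.2 i * t.2.1 i ^ (j : ℕ))} ≃ Σ ux : P, Fib ux :=
    { toFun := fun t => ⟨(t.1.1.1, t.1.2.1), ⟨(t.1.1.2, t.1.2.2), t.2⟩⟩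
      invFun := fun s => ⟨((s.1.1, s.2.1.1), (s.1.2, s.2.1.2)), s.2.2⟩
      left_inv := fun t => rfl
      right_inv := fun s => rfl }
  have hcards : Nat.card {t : P × P //
        (fun j : Fin (d + 1) => ∑ i, t.1.2 i * t.1.1 i ^ (j : ℕ)) =
        (fun j : Fin (d + 1) => ∑ i, t.2.2 i * t.2.1 i ^ (j : ℕ))} =
      ∑ ux : P, Nat.card (Fib ux) := by
    rw [Nat.card_congr e]
    letI : ∀ ux : P, Fintype (Fib ux) := fun ux => Fintype.ofFinite _
    rw [Nat.card_eq_fintype_card, Fintype.card_sigma]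
    exact Finset.sum_congr rfl fun ux _ => (Nat.card_eq_fintype_card).symm
  -- the size of the value set
  let mf : P → ℕ := fun ux => (Finset.image ux.1 Finset.univ ∪ Finset.image ux.2 Finset.univ).card
  have hm2k : ∀ ux : P, mf ux ≤ 2 * k := by
    intro ux
    calc mf ux ≤ (Finset.image ux.1 Finset.univ).card + (Finset.image ux.2 Finset.univ).card :=
          Finset.card_union_le _ _
      _ ≤ k + k := add_le_add
          (le_trans Finset.card_image_le (by simp)) (le_trans Finset.card_image_le (by simp))
      _ = 2 * k := by omega
  have hfib : ∀ ux : P, (Nat.card (Fib ux) : ℝ) ≤ (q:ℝ) ^ (2 * k - min (mf ux) (d + 1)) := by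
    intro ux
    have := aux_fiber_card (F := F) k d ux.1 ux.2
    exact_mod_cast this
  -- main chain
  rw [hcards]
  push_cast
  have hsplit := Finset.sum_filter_add_sum_filter_not Finset.univ
    (fun ux : P => d + 1 ≤ mf ux) (fun ux => (q:ℝ) ^ (2 * k - min (mf ux) (d + 1)))
  calc (∑ ux : P, (Nat.card (Fib ux) : ℝ))
      ≤ ∑ ux : P, (q:ℝ) ^ (2 * k - min (mf ux) (d + 1)) := Finset.sum_le_sum fun ux _ => hfib ux
    _ = (∑ ux ∈ Finset.univ.filter (fun ux : P => d + 1 ≤ mf ux),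
          (q:ℝ) ^ (2 * k - min (mf ux) (d + 1))) +
        (∑ ux ∈ Finset.univ.filter (fun ux : P => ¬ (d + 1 ≤ mf ux)),
          (q:ℝ) ^ (2 * k - min (mf ux) (d + 1))) := hsplit.symm
    _ ≤ (q:ℝ) ^ (4 * k) / (q:ℝ) ^ (d + 1) + ((q:ℝ) * (d:ℝ)) ^ (2 * k) := by
        gcongr ?_ + ?_
        · -- part 1
          have hbound : ∀ ux ∈ Finset.univ.filter (fun ux : P => d + 1 ≤ mf ux),
              (q:ℝ) ^ (2 * k - min (mf ux) (d + 1)) ≤ (q:ℝ) ^ (2 * k) / (q:ℝ) ^ (d + 1) := by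
            intro ux hux
            rw [Finset.mem_filter] at hux
            have h1 : d + 1 ≤ 2 * k := le_trans hux.2 (hm2k ux)
            rw [min_eq_right hux.2, le_div_iff₀ (by positivity)]
            rw [← pow_add, Nat.sub_add_cancel h1]
          have hcardle : (Finset.univ.filter (fun ux : P => d + 1 ≤ mf ux)).card ≤ q ^ k * q ^ k := by
            refine le_trans (Finset.card_filter_le _ _) ?_
            rw [Finset.card_univ]
            simp [P, q]
          calc (∑ ux ∈ Finset.univ.filter (fun ux : P => d + 1 ≤ mf ux),
                (q:ℝ) ^ (2 * k - min (mf ux) (d + 1)))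
              ≤ (Finset.univ.filter (fun ux : P => d + 1 ≤ mf ux)).card •
                  ((q:ℝ) ^ (2 * k) / (q:ℝ) ^ (d + 1)) := Finset.sum_le_card_nsmul _ _ _ hbound
            _ ≤ ((q:ℝ) ^ k * (q:ℝ) ^ k) * ((q:ℝ) ^ (2 * k) / (q:ℝ) ^ (d + 1)) := by
                rw [nsmul_eq_mul]
                gcongr
                exact_mod_cast hcardle
            _ = (q:ℝ) ^ (4 * k) / (q:ℝ) ^ (d + 1) := by
                rw [mul_div_assoc', ← pow_add, ← pow_add]
                congr 2
                omega
        · -- part 2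
          set s2 := Finset.univ.filter (fun ux : P => ¬ (d + 1 ≤ mf ux)) with hs2
          let Smap : P → Finset F := fun ux =>
            Finset.image ux.1 Finset.univ ∪ Finset.image ux.2 Finset.univ
          let Tset : Finset (Finset F) :=
            (Finset.range (min d (2 * k) + 1)).biUnion
              (fun n => Finset.powersetCard n (Finset.univ : Finset F))
          have hmap : ∀ ux ∈ s2, Smap ux ∈ Tset := by
            intro ux hux
            rw [hs2, Finset.mem_filter] at hux
            refine Finset.mem_biUnion.2 ⟨mf ux, Finset.mem_range.2 ?_, ?_⟩
            · have := hm2k ux; omega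
            · exact Finset.mem_powersetCard.2 ⟨Finset.subset_univ _, rfl⟩
          rw [← Finset.sum_fiberwise_of_maps_to hmap]
          have hinner : ∀ A ∈ Tset,
              (∑ ux ∈ s2.filter (fun ux => Smap ux = A),
                (q:ℝ) ^ (2 * k - min (mf ux) (d + 1))) ≤
              ((A.card : ℝ) ^ k * (A.card : ℝ) ^ k) * (q:ℝ) ^ (2 * k - A.card) := by
            intro A hA
            have hterm : ∀ ux ∈ s2.filter (fun ux => Smap ux = A),
                (q:ℝ) ^ (2 * k - min (mf ux) (d + 1)) = (q:ℝ) ^ (2 * k - A.card) := by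
              intro ux hux
              rw [Finset.mem_filter, hs2, Finset.mem_filter] at hux
              have hmA : mf ux = A.card := by rw [← hux.2]
              rw [min_eq_left (by omega), hmA]
            rw [Finset.sum_congr rfl hterm, Finset.sum_const, nsmul_eq_mul]
            have hsub : s2.filter (fun ux => Smap ux = A) ⊆
                (Fintype.piFinset fun _ : Fin k => A) ×ˢ (Fintype.piFinset fun _ : Fin k => A) := by
              intro ux hux
              rw [Finset.mem_filter] at hux
              rw [Finset.mem_product]
              constructor <;> rw [Fintype.mem_piFinset] <;> intro i
              · exact hux.2 ▸ Finset.mem_union_left _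
                  (Finset.mem_image_of_mem _ (Finset.mem_univ i))
              · exact hux.2 ▸ Finset.mem_union_right _
                  (Finset.mem_image_of_mem _ (Finset.mem_univ i))
            have hcard : (s2.filter (fun ux => Smap ux = A)).card ≤ A.card ^ k * A.card ^ k := by
              refine le_trans (Finset.card_le_card hsub) ?_
              rw [Finset.card_product]
              simp [Fintype.card_piFinset_const]
            gcongr
            calc ((s2.filter (fun ux => Smap ux = A)).card : ℝ)
                  ≤ ((A.card ^ k * A.card ^ k : ℕ) : ℝ) := by exact_mod_cast hcard
                _ = (A.card : ℝ) ^ k * (A.card : ℝ) ^ k := by push_cast; ring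
          calc (∑ A ∈ Tset, ∑ ux ∈ s2.filter (fun ux => Smap ux = A),
                (q:ℝ) ^ (2 * k - min (mf ux) (d + 1)))
              ≤ ∑ A ∈ Tset, ((A.card : ℝ) ^ k * (A.card : ℝ) ^ k) * (q:ℝ) ^ (2 * k - A.card) :=
                Finset.sum_le_sum hinner
            _ = ∑ n ∈ Finset.range (min d (2 * k) + 1),
                  ∑ A ∈ Finset.powersetCard n (Finset.univ : Finset F),
                    ((A.card : ℝ) ^ k * (A.card : ℝ) ^ k) * (q:ℝ) ^ (2 * k - A.card) := by
                refine (Finset.sum_biUnion ?_)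
                intro a _ b _ hab
                refine Finset.disjoint_left.2 fun A hAa hAb => hab ?_
                rw [Finset.mem_powersetCard] at hAa hAb
                exact hAa.2.symm.trans hAb.2
            _ = ∑ n ∈ Finset.range (min d (2 * k) + 1),
                  (q.choose n : ℝ) * (((n : ℝ) ^ k * (n : ℝ) ^ k) * (q:ℝ) ^ (2 * k - n)) := by
                refine Finset.sum_congr rfl fun n hn => ?_
                have : ∀ A ∈ Finset.powersetCard n (Finset.univ : Finset F),
                    ((A.card : ℝ) ^ k * (A.card : ℝ) ^ k) * (q:ℝ) ^ (2 * k - A.card) =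
                    ((n : ℝ) ^ k * (n : ℝ) ^ k) * (q:ℝ) ^ (2 * k - n) := by
                  intro A hA
                  rw [(Finset.mem_powersetCard.1 hA).2]
                rw [Finset.sum_congr rfl this, Finset.sum_const, nsmul_eq_mul,
                  Finset.card_powersetCard, Finset.card_univ]
            _ ≤ ∑ n ∈ Finset.range (min d (2 * k) + 1),
                  (q:ℝ) ^ (2 * k) * ((n : ℝ) ^ (2 * k) / (Nat.factorial n)) := by
                refine Finset.sum_le_sum fun n hn => ?_
                rw [Finset.mem_range] at hn
                have hn2k : n ≤ 2 * k := by omega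
                have hch : (q.choose n : ℝ) ≤ (q:ℝ) ^ n / (Nat.factorial n) := by
                  exact_mod_cast Nat.choose_le_pow_div n q
                have hqq : (q:ℝ) ^ n * (q:ℝ) ^ (2 * k - n) = (q:ℝ) ^ (2 * k) := by
                  rw [← pow_add]; congr 1; omega
                calc (q.choose n : ℝ) * (((n : ℝ) ^ k * (n : ℝ) ^ k) * (q:ℝ) ^ (2 * k - n))
                    ≤ ((q:ℝ) ^ n / (Nat.factorial n)) *
                        (((n : ℝ) ^ k * (n : ℝ) ^ k) * (q:ℝ) ^ (2 * k - n)) := by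
                      apply mul_le_mul_of_nonneg_right hch (by positivity)
                  _ = ((q:ℝ) ^ n * (q:ℝ) ^ (2 * k - n)) * ((n : ℝ) ^ (k + k) / (Nat.factorial n)) := by
                      rw [pow_add]; ring
                  _ = (q:ℝ) ^ (2 * k) * ((n : ℝ) ^ (2 * k) / (Nat.factorial n)) := by
                      rw [hqq]; congr 3; omega
            _ = (q:ℝ) ^ (2 * k) *
                  ∑ n ∈ Finset.range (min d (2 * k) + 1), ((n : ℝ) ^ (2 * k) / (Nat.factorial n)) := by
                rw [Finset.mul_sum]
            _ ≤ (q:ℝ) ^ (2 * k) * (d : ℝ) ^ (2 * k) := by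
                gcongr
                calc (∑ n ∈ Finset.range (min d (2 * k) + 1), ((n : ℝ) ^ (2 * k) / (Nat.factorial n)))
                    ≤ ∑ n ∈ Finset.range (d + 1), ((n : ℝ) ^ (2 * k) / (Nat.factorial n)) := by
                      refine Finset.sum_le_sum_of_subset_of_nonneg
                        (Finset.range_subset_range.2 (by omega)) (fun n _ _ => by positivity)
                  _ = ∑ n ∈ Finset.Icc 1 d, ((n : ℝ) ^ (2 * k) / (Nat.factorial n)) := by
                      have hins : Finset.range (d + 1) = insert 0 (Finset.Icc 1 d) := by
                        ext n; simp [Finset.mem_range, Finset.mem_Icc]; omega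
                      rw [hins, Finset.sum_insert (by simp)]
                      have h0 : ((0:ℕ):ℝ) ^ (2 * k) = 0 := by
                        rw [Nat.cast_zero, zero_pow (by omega)]
                      rw [h0, zero_div, zero_add]
                  _ ≤ (d : ℝ) ^ (2 * k) := aux_sum_pow_div_factorial (2 * k) (by omega) d hd
            _ = ((q:ℝ) * (d:ℝ)) ^ (2 * k) := (mul_pow _ _ _).symm
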